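/- Let p be an odd prime. The average, over all p! permutations α of Z_p, of the number Ψ(α) of collinear 3-element subsets of the graph Γ(α) = {(i, α(i)) : i ∈ Z_p}, equals p(p-1)/6. Equivalently, the sum of Ψ(α) over all permutations α of Z_p equals p! · p(p-1)/6. -/

import Mathlib

/-- The number of collinear 3-element subsets of the graph of a permutation of `ZMod p`. -/
def psi (p : ℕ) [NeZero p] (α : Equiv.Perm (ZMod p)) : ℕ :=
  (((Finset.univ : Finset (ZMod p)).powersetCard 3).filter (fun s =>
    ∀ x ∈ s, ∀ y ∈ s, ∀ z ∈ s,
      (α y - α x) * (z - x) = (α z - α x) * (y - x))).card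

open Finset Equiv

/-- Number of permutations fixing every element of `s` is `(n - s.card)!`. -/
lemma card_fixing {α : Type*} [Fintype α] [DecidableEq α] (s : Finset α) :
    (Finset.univ.filter fun β : Equiv.Perm α => ∀ x ∈ s, β x = x).card
      = (Fintype.card α - s.card).factorial := by
  rw [← Fintype.card_subtype]
  have e1 : {β : Equiv.Perm α // ∀ x ∈ s, β x = x}
      ≃ {f : Equiv.Perm α // ∀ a, ¬(a ∉ s) → f a = a} :=
    Equiv.subtypeEquivRight (fun f => by simp)
  rw [Fintype.card_congr (e1.trans (Equiv.Perm.subtypeEquivSubtypePerm (fun a => a ∉ s)).symm),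
    Fintype.card_perm]
  congr 1
  rw [Fintype.card_subtype_compl, Fintype.card_coe]

/-- Number of permutations with three prescribed (distinct) values. -/
lemma card_prescribed {α : Type*} [Fintype α] [DecidableEq α]
    (i j k a b c : α) (hij : i ≠ j) (hik : i ≠ k) (hjk : j ≠ k)
    (hab : a ≠ b) (hac : a ≠ c) (hbc : b ≠ c) :
    (Finset.univ.filter fun β : Equiv.Perm α => β i = a ∧ β j = b ∧ β k = c).card
      = (Fintype.card α - 3).factorial := by
  classical
  set σ₁ : Equiv.Perm α := Equiv.swap a i with hσ₁
  set σ₂ : Equiv.Perm α := Equiv.swap (σ₁ b) j with hσ₂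
  set σ₃ : Equiv.Perm α := Equiv.swap (σ₂ (σ₁ c)) k with hσ₃
  set σ : Equiv.Perm α := σ₃ * σ₂ * σ₁ with hσ
  have h1a : σ₁ a = i := Equiv.swap_apply_left a i
  have hb_ne : σ₁ b ≠ i := by
    rw [← h1a]; exact fun h => hab.symm (σ₁.injective h)
  have hc_ne_i : σ₁ c ≠ i := by
    rw [← h1a]; exact fun h => hac.symm (σ₁.injective h)
  have hc_ne_b : σ₁ c ≠ σ₁ b := fun h => hbc.symm (σ₁.injective h)
  have h2i : σ₂ i = i := Equiv.swap_apply_of_ne_of_ne (Ne.symm hb_ne) hij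
  have h2b : σ₂ (σ₁ b) = j := Equiv.swap_apply_left _ _
  have h2c_ne_i : σ₂ (σ₁ c) ≠ i := by
    rw [← h2i]; exact fun h => hc_ne_i (σ₂.injective h)
  have h2c_ne_j : σ₂ (σ₁ c) ≠ j := by
    rw [← h2b]; exact fun h => hc_ne_b (σ₂.injective h)
  have h3i : σ₃ i = i := Equiv.swap_apply_of_ne_of_ne (Ne.symm h2c_ne_i) hik
  have h3j : σ₃ j = j := Equiv.swap_apply_of_ne_of_ne (Ne.symm h2c_ne_j) hjk
  have hσa : σ a = i := by simp only [hσ, Equiv.Perm.mul_apply, h1a, h2i, h3i]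
  have hσb : σ b = j := by simp only [hσ, Equiv.Perm.mul_apply, h2b, h3j]
  have hσc : σ c = k := by
    simp only [hσ, Equiv.Perm.mul_apply, hσ₃]; exact Equiv.swap_apply_left _ _
  have hcard3 : ({i, j, k} : Finset α).card = 3 := by
    rw [Finset.card_insert_of_notMem (by simp [hij, hik]),
      Finset.card_insert_of_notMem (by simp [hjk]), Finset.card_singleton]
  rw [← hcard3, ← card_fixing ({i, j, k} : Finset α)]
  apply Finset.card_bij' (fun β _ => σ * β) (fun γ _ => σ⁻¹ * γ)
  · intro β hβ
    simp only [Finset.mem_filter, Finset.mem_univ, true_and] at hβ ⊢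
    intro x hx
    simp only [Finset.mem_insert, Finset.mem_singleton] at hx
    rcases hx with rfl | rfl | rfl
    · simp [Equiv.Perm.mul_apply, hβ.1, hσa]
    · simp [Equiv.Perm.mul_apply, hβ.2.1, hσb]
    · simp [Equiv.Perm.mul_apply, hβ.2.2, hσc]
  · intro γ hγ
    simp only [Finset.mem_filter, Finset.mem_univ, true_and] at hγ ⊢
    have hi := hγ i (by simp)
    have hj := hγ j (by simp)
    have hk := hγ k (by simp)
    refine ⟨?_, ?_, ?_⟩
    · rw [Equiv.Perm.mul_apply, hi, ← hσa]; simp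
    · rw [Equiv.Perm.mul_apply, hj, ← hσb]; simp
    · rw [Equiv.Perm.mul_apply, hk, ← hσc]; simp
  · intro β _; simp [mul_assoc, ← Equiv.Perm.mul_apply]
  · intro γ _; simp [mul_assoc, ← Equiv.Perm.mul_apply]

/-- Collinearity over a 3-element set reduces to a single equation. -/
lemma collinear_iff (p : ℕ) [NeZero p] (α : Equiv.Perm (ZMod p)) (i j k : ZMod p) :
    (∀ x ∈ ({i, j, k} : Finset (ZMod p)), ∀ y ∈ ({i, j, k} : Finset (ZMod p)),
        ∀ z ∈ ({i, j, k} : Finset (ZMod p)),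
        (α y - α x) * (z - x) = (α z - α x) * (y - x))
      ↔ (α j - α i) * (k - i) = (α k - α i) * (j - i) := by
  constructor
  · intro H
    exact H i (by simp) j (by simp) k (by simp)
  · intro h x hx y hy z hz
    simp only [Finset.mem_insert, Finset.mem_singleton] at hx hy hz
    rcases hx with rfl | rfl | rfl <;> rcases hy with rfl | rfl | rfl <;>
      rcases hz with rfl | rfl | rfl <;>
      first
        | ring1
        | linear_combination h
        | linear_combination -h

/-- For a fixed triple of distinct abscissas, the number of permutations whose graph is
collinear there is `(p² - p)·(p-3)!`. -/
lemma count_per_triple (p : ℕ) [NeZero p] [Fact p.Prime] (i j k : ZMod p)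
    (hij : i ≠ j) (hik : i ≠ k) (hjk : j ≠ k) :
    (Finset.univ.filter fun β : Equiv.Perm (ZMod p) =>
        (β j - β i) * (k - i) = (β k - β i) * (j - i)).card
      = (p * p - p) * (p - 3).factorial := by
  have hji : (j : ZMod p) - i ≠ 0 := sub_ne_zero.mpr (Ne.symm hij)
  have hki : (k : ZMod p) - i ≠ 0 := sub_ne_zero.mpr (Ne.symm hik)
  have hmem : ∀ β ∈ (Finset.univ.filter fun β : Equiv.Perm (ZMod p) =>
      (β j - β i) * (k - i) = (β k - β i) * (j - i)),
      (β i, β j) ∈ (Finset.univ : Finset (ZMod p)).offDiag := by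
    intro β _
    simp only [Finset.mem_offDiag, Finset.mem_univ, true_and]
    exact fun h => hij (β.injective h)
  rw [Finset.card_eq_sum_card_fiberwise hmem]
  have hterm : ∀ ab ∈ (Finset.univ : Finset (ZMod p)).offDiag,
      ((Finset.univ.filter fun β : Equiv.Perm (ZMod p) =>
        (β j - β i) * (k - i) = (β k - β i) * (j - i)).filter
          fun β => (β i, β j) = ab).card = (p - 3).factorial := by
    rintro ⟨a, b⟩ hab
    rw [Finset.mem_offDiag] at hab
    have hab' : a ≠ b := hab.2.2
    have hba : b - a ≠ 0 := sub_ne_zero.mpr (Ne.symm hab')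
    set c : ZMod p := a + (b - a) * (k - i) * (j - i)⁻¹ with hc
    have hfe : ((Finset.univ.filter fun β : Equiv.Perm (ZMod p) =>
        (β j - β i) * (k - i) = (β k - β i) * (j - i)).filter
          fun β => (β i, β j) = (a, b))
        = Finset.univ.filter fun β : Equiv.Perm (ZMod p) =>
            β i = a ∧ β j = b ∧ β k = c := by
      ext β
      simp only [Finset.mem_filter, Finset.mem_univ, true_and, Prod.mk.injEq]
      constructor
      · rintro ⟨hQ, ha, hb⟩
        refine ⟨ha, hb, ?_⟩
        rw [ha, hb] at hQ
        have hdiv : β k - a = (b - a) * (k - i) / (j - i) := by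
          rw [eq_div_iff hji]; linear_combination -hQ
        rw [div_eq_mul_inv] at hdiv
        rw [hc]
        linear_combination hdiv
      · rintro ⟨ha, hb, hcc⟩
        refine ⟨?_, ha, hb⟩
        rw [ha, hb, hcc, hc]
        have hinv : (j - i)⁻¹ * (j - i) = 1 := inv_mul_cancel₀ hji
        linear_combination -((b - a) * (k - i)) * hinv
    rw [hfe]
    have hac : a ≠ c := by
      intro h
      have h0 : (b - a) * (k - i) * (j - i)⁻¹ = 0 := by
        rw [hc] at h; linear_combination -h
      exact (mul_ne_zero (mul_ne_zero hba hki) (inv_ne_zero hji)) h0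
    have hbc : b ≠ c := by
      intro h
      rw [hc] at h
      have hinv : (j - i)⁻¹ * (j - i) = 1 := inv_mul_cancel₀ hji
      have h1 : (b - a) * (j - i) = (b - a) * (k - i) := by
        linear_combination (j - i) * h + (b - a) * (k - i) * hinv
      have h2 : j - i = k - i := mul_left_cancel₀ hba h1
      exact hjk (by linear_combination h2)
    rw [card_prescribed i j k a b c hij hik hjk hab' hac hbc, ZMod.card]
  rw [Finset.sum_congr rfl hterm, Finset.sum_const, Finset.offDiag_card,
    Finset.card_univ, ZMod.card, smul_eq_mul]

theorem stmt_1 (p : ℕ) [NeZero p] (hp : p.Prime) (hodd : Odd p) [Fact p.Prime] :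
    (∑ α : Equiv.Perm (ZMod p), (psi p α : ℚ)) / (p.factorial : ℚ)
      = (p * (p - 1) : ℚ) / 6 := by
  have hp2 : p ≠ 2 := by
    rintro rfl
    exact (Nat.not_odd_iff_even.mpr (by decide)) hodd
  have h3 : 3 ≤ p := by
    have := hp.two_le
    omega
  have key : ∑ α : Equiv.Perm (ZMod p), psi p α
      = p.choose 3 * ((p * p - p) * (p - 3).factorial) := by
    calc ∑ α : Equiv.Perm (ZMod p), psi p α
        = ∑ α : Equiv.Perm (ZMod p),
            ∑ s ∈ (Finset.univ : Finset (ZMod p)).powersetCard 3,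
              if (∀ x ∈ s, ∀ y ∈ s, ∀ z ∈ s,
                (α y - α x) * (z - x) = (α z - α x) * (y - x)) then 1 else 0 := by
          refine Finset.sum_congr rfl fun α _ => ?_
          rw [psi, Finset.card_filter]
      _ = ∑ s ∈ (Finset.univ : Finset (ZMod p)).powersetCard 3,
            ∑ α : Equiv.Perm (ZMod p),
              if (∀ x ∈ s, ∀ y ∈ s, ∀ z ∈ s,
                (α y - α x) * (z - x) = (α z - α x) * (y - x)) then 1 else 0 :=
          Finset.sum_comm
      _ = ∑ s ∈ (Finset.univ : Finset (ZMod p)).powersetCard 3,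
            (p * p - p) * (p - 3).factorial := by
          refine Finset.sum_congr rfl fun s hs => ?_
          have hcard : s.card = 3 := (Finset.mem_powersetCard.mp hs).2
          obtain ⟨i, j, k, hij, hik, hjk, rfl⟩ := Finset.card_eq_three.mp hcard
          rw [← Finset.card_filter]
          have hfc : (Finset.univ.filter fun α : Equiv.Perm (ZMod p) =>
              ∀ x ∈ ({i, j, k} : Finset (ZMod p)), ∀ y ∈ ({i, j, k} : Finset (ZMod p)),
                ∀ z ∈ ({i, j, k} : Finset (ZMod p)),
                (α y - α x) * (z - x) = (α z - α x) * (y - x))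
              = Finset.univ.filter fun β : Equiv.Perm (ZMod p) =>
                  (β j - β i) * (k - i) = (β k - β i) * (j - i) :=
            Finset.filter_congr fun α _ => collinear_iff p α i j k
          rw [hfc]
          exact count_per_triple p i j k hij hik hjk
      _ = p.choose 3 * ((p * p - p) * (p - 3).factorial) := by
          rw [Finset.sum_const, Finset.card_powersetCard, Finset.card_univ, ZMod.card,
            smul_eq_mul]
  have hcast : ∑ α : Equiv.Perm (ZMod p), (psi p α : ℚ)
      = ((∑ α : Equiv.Perm (ZMod p), psi p α : ℕ) : ℚ) := by push_cast; ring
  rw [hcast, key]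
  have hfact : (p.factorial : ℚ) = (p.choose 3 : ℚ) * 6 * ((p - 3).factorial : ℚ) := by
    rw [← Nat.choose_mul_factorial_mul_factorial h3]
    push_cast [Nat.factorial]
    ring
  have hpp : ((p * p - p : ℕ) : ℚ) = (p : ℚ) * ((p : ℚ) - 1) := by
    have h1 : p ≤ p * p := Nat.le_mul_of_pos_left p (by omega)
    push_cast [Nat.cast_sub h1]
    ring
  have hC : (p.choose 3 : ℚ) ≠ 0 := Nat.cast_ne_zero.mpr (Nat.choose_pos h3).ne'
  have hF : ((p - 3).factorial : ℚ) ≠ 0 := Nat.cast_ne_zero.mpr (Nat.factorial_ne_zero _)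
  rw [hfact, Nat.cast_mul, Nat.cast_mul, hpp]
  field_simp
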